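/- arXiv:2401.00171 — 2 statements merged into one kernel-verified Lean document; each statement's English description precedes it below -/
import Mathlib

section
/- Let M > 0 and suppose k, h : ℝ → ℝ are Lipschitz on [-M, M] with Lipschitz constants L_k, L_h. Then there exists a constant C > 0, depending only on M, L_k, L_h, sup_{|s|≤M}|k(s)|, sup_{|s|≤M}|h(s)| and δ, such that for all measurable functions θ_1, θ_2 : [-1,1] → [-M, M] one has ‖L(θ_1) − L(θ_2)‖_{L^2_w} ≤ C ‖θ_1 − θ_2‖_{L^2_w} (Lipschitz continuity of the peridynamic operator on uniformly bounded sets). -/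
open MeasureTheory Real Set Filter

noncomputable section

/-- The distributed influence function `φ_δ`. -/
def phiDelta (δ z : ℝ) : ℝ := if 1 - δ ≤ |z| then (|z| - 1 + δ) / δ else 0

/-- `φ̄_δ(z) = φ_δ(z)/|z|`. -/
def phiBar (δ z : ℝ) : ℝ := phiDelta δ z / |z|

/-- The Chebyshev weight `w(z) = (1-z²)^{-1/2}`. -/
def chebW (z : ℝ) : ℝ := (Real.sqrt (1 - z ^ 2))⁻¹

/-- The `k`-th Chebyshev polynomial of the first kind, `T_k(z) = cos (k arccos z)`. -/
def chebT (k : ℕ) (z : ℝ) : ℝ := Real.cos (k * Real.arccos z)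

/-- The weighted `L²_w` norm on `(-1,1)`. -/
def L2wNorm (u : ℝ → ℝ) : ℝ := (∫ z in Ioo (-1 : ℝ) 1, u z ^ 2 * chebW z) ^ (1/2 : ℝ)

/-- The weighted `L^q_w` norm on `(-1,1)`. -/
def LqwNorm (q : ℝ) (u : ℝ → ℝ) : ℝ := (∫ z in Ioo (-1 : ℝ) 1, |u z| ^ q * chebW z) ^ (1/q)

/-- The weighted inner product `(u,v)_w`. -/
def innerW (u v : ℝ → ℝ) : ℝ := ∫ z in Ioo (-1 : ℝ) 1, u z * v z * chebW z

/-- Membership in `L²_w([-1,1])`. -/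
def MemL2w (u : ℝ → ℝ) : Prop :=
  Measurable u ∧ IntegrableOn (fun z => u z ^ 2 * chebW z) (Ioo (-1 : ℝ) 1)

/-- The peridynamic operator `L(θ)`. -/
def periL (δ : ℝ) (k h θ : ℝ → ℝ) (z : ℝ) : ℝ :=
  ∫ z' in Ioo (-1 : ℝ) 1,
    phiBar δ (z' - z) * ((k (θ z) + k (θ z')) / 2) * ((h (θ z') + z') - (h (θ z) + z))

/-- The continuous Chebyshev normalization constants. -/
def gammaC (k : ℕ) : ℝ := if k = 0 then π else π / 2

/-- The `k`-th Chebyshev coefficient of `u`. -/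
def chebCoeff (u : ℝ → ℝ) (k : ℕ) : ℝ := innerW u (chebT k) / gammaC k

/-- The orthogonal projection onto `S_N = span {T_0, …, T_N}`. -/
def PN (N : ℕ) (u : ℝ → ℝ) : ℝ → ℝ :=
  fun z => ∑ k ∈ Finset.range (N + 1), chebCoeff u k * chebT k z

/-- The space `S_N = span {T_0, …, T_N}`. -/
def SN (N : ℕ) : Set (ℝ → ℝ) :=
  {u | ∃ c : ℕ → ℝ, ∀ z, u z = ∑ k ∈ Finset.range (N + 1), c k * chebT k z}

/-- The squared `H^s_w` norm, `‖u‖² = ∑_{k≤s} ‖u^{(k)}‖²_{L²_w}`. -/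
def HswNormSq (s : ℕ) (u : ℝ → ℝ) : ℝ :=
  ∑ k ∈ Finset.range (s + 1), L2wNorm (iteratedDeriv k u) ^ 2

/-- The piecewise linear time interpolant of `(θ_n)`: for `t ∈ (t_{n-1}, t_n]`,
`θ^N_{Δt}(·,t) = ((t-t_{n-1})/Δt) θ_n + ((t_n-t)/Δt) θ_{n-1}`. -/
def pwLinear (Δt : ℝ) (θseq : ℕ → ℝ → ℝ) (t z : ℝ) : ℝ :=
  ((t - ((⌈t / Δt⌉₊ : ℝ) - 1) * Δt) / Δt) * θseq ⌈t / Δt⌉₊ z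
    + (((⌈t / Δt⌉₊ : ℝ) * Δt - t) / Δt) * θseq (⌈t / Δt⌉₊ - 1) z

/-- The piecewise constant interpolant `θ̃`: `θ̃(·,t) = θ_n` for `t ∈ (t_{n-1}, t_n]`. -/
def pwConst (Δt : ℝ) (θseq : ℕ → ℝ → ℝ) (t z : ℝ) : ℝ := θseq ⌈t / Δt⌉₊ z

/-- The piecewise constant interpolant `θ̂`: `θ̂(·,t) = θ_{n-1}` for `t ∈ (t_{n-1}, t_n]`. -/
def pwConstHat (Δt : ℝ) (θseq : ℕ → ℝ → ℝ) (t z : ℝ) : ℝ := θseq (⌈t / Δt⌉₊ - 1) z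

/-- The (a.e.) time derivative of the piecewise linear interpolant:
`∂_t θ^N_{Δt}(·,t) = (θ_n - θ_{n-1})/Δt` for `t ∈ (t_{n-1}, t_n)`. -/
def pwDeriv (Δt : ℝ) (θseq : ℕ → ℝ → ℝ) (t z : ℝ) : ℝ :=
  (θseq ⌈t / Δt⌉₊ z - θseq (⌈t / Δt⌉₊ - 1) z) / Δt



lemma abs_phiBar_le {δ : ℝ} (hδ : δ ∈ Ioo (0 : ℝ) 1) (t : ℝ) : |phiBar δ t| ≤ 1 / δ := by
  obtain ⟨hδ0, hδ1⟩ := hδ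
  unfold phiBar phiDelta
  split_ifs with h
  · have ht : 0 < |t| := lt_of_lt_of_le (by linarith) h
    have hnum : 0 ≤ |t| - 1 + δ := by linarith
    rw [div_div, abs_of_nonneg (by positivity), div_le_div_iff₀ (by positivity) hδ0]
    nlinarith
  · simp [abs_nonneg]
    positivity

lemma measurable_phiBar (δ : ℝ) : Measurable (phiBar δ) := by
  unfold phiBar phiDelta
  apply Measurable.div
  · exact Measurable.ite (measurableSet_le measurable_const measurable_id.abs)
      (by fun_prop) measurable_const
  · exact measurable_id.abs

lemma chebW_nonneg (z : ℝ) : 0 ≤ chebW z := by unfold chebW; positivity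

lemma measurable_chebW : Measurable chebW := by unfold chebW; fun_prop

lemma one_le_chebW {z : ℝ} (hz : z ∈ Ioo (-1 : ℝ) 1) : 1 ≤ chebW z := by
  have h1 : 0 < 1 - z ^ 2 := by nlinarith [hz.1, hz.2]
  have h2 : Real.sqrt (1 - z ^ 2) ≤ 1 := Real.sqrt_le_one.mpr (by nlinarith)
  unfold chebW
  rw [le_inv_comm₀ one_pos (Real.sqrt_pos.2 h1)]
  simpa using h2

lemma integrableOn_chebW : IntegrableOn chebW (Ioo (-1 : ℝ) 1) := by
  have hrpow : IntervalIntegrable (fun x : ℝ => x ^ (-(1/2) : ℝ)) volume 0 2 :=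
    intervalIntegral.intervalIntegrable_rpow' (by norm_num)
  have h1 : IntervalIntegrable (fun x : ℝ => (1 - x) ^ (-(1/2) : ℝ)) volume (-1) 1 := by
    have := (hrpow.comp_sub_left 1).symm
    norm_num at this
    exact this
  have h2 : IntervalIntegrable (fun x : ℝ => (1 + x) ^ (-(1/2) : ℝ)) volume (-1) 1 := by
    have := hrpow.comp_add_right 1
    norm_num at this
    convert this using 2 with x
    ring_nf
  have hg : IntegrableOn (fun x : ℝ => (1 - x) ^ (-(1/2) : ℝ) + (1 + x) ^ (-(1/2) : ℝ))
      (Ioo (-1 : ℝ) 1) := by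
    have := (h1.add h2)
    rw [intervalIntegrable_iff, Set.uIoc_of_le (by norm_num : (-1:ℝ) ≤ 1)] at this
    exact this.mono_set Ioo_subset_Ioc_self
  refine Integrable.mono' hg ?_ ?_
  · exact (Measurable.inv ((continuous_const.sub (continuous_pow 2)).sqrt.measurable)).aestronglyMeasurable
  · filter_upwards [ae_restrict_mem measurableSet_Ioo] with z hz
    obtain ⟨hz1, hz2⟩ := hz
    have h1z : 0 < 1 - z := by linarith
    have h2z : 0 < 1 + z := by linarith
    have hsq : 0 < 1 - z ^ 2 := by nlinarith
    rw [Real.norm_eq_abs, abs_of_nonneg (by unfold chebW; positivity)]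
    rcases le_or_gt 0 z with hz0 | hz0
    · have key : chebW z ≤ (1 - z) ^ (-(1/2) : ℝ) := by
        unfold chebW
        rw [Real.rpow_neg h1z.le, ← Real.sqrt_eq_rpow]
        apply inv_anti₀ (Real.sqrt_pos.2 (by nlinarith))
        exact Real.sqrt_le_sqrt (by nlinarith)
      have : (0:ℝ) ≤ (1 + z) ^ (-(1/2) : ℝ) := by positivity
      linarith
    · have key : chebW z ≤ (1 + z) ^ (-(1/2) : ℝ) := by
        unfold chebW
        rw [Real.rpow_neg h2z.le, ← Real.sqrt_eq_rpow]
        apply inv_anti₀ (Real.sqrt_pos.2 (by nlinarith))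
        exact Real.sqrt_le_sqrt (by nlinarith)
      have : (0:ℝ) ≤ (1 - z) ^ (-(1/2) : ℝ) := by positivity
      linarith

lemma exists_cont_ext {M : ℝ} (hM : 0 < M) {f : ℝ → ℝ} {Lf : NNReal}
    (hf : LipschitzOnWith Lf f (Icc (-M) M)) :
    ∃ g : ℝ → ℝ, Continuous g ∧ ∀ x ∈ Icc (-M) M, g x = f x := by
  refine ⟨fun x => f (max (-M) (min x M)), ?_, ?_⟩
  · have hclamp : LipschitzWith 1 (fun x : ℝ => max (-M) (min x M)) := by
      have h1 : LipschitzWith 1 (fun x : ℝ => min x M) := by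
        simpa using LipschitzWith.min LipschitzWith.id (LipschitzWith.const M)
      simpa using LipschitzWith.max (LipschitzWith.const (-M)) h1
    have hmem : ∀ x : ℝ, max (-M) (min x M) ∈ Icc (-M) M := by
      intro x
      constructor
      · exact le_max_left _ _
      · exact max_le (by linarith) (min_le_right _ _)
    have : LipschitzWith Lf (fun x => f (max (-M) (min x M))) := by
      apply LipschitzWith.of_dist_le_mul
      intro x y
      have h1 := hf.dist_le_mul _ (hmem x) _ (hmem y)
      have h2 := hclamp.dist_le_mul x y
      push_cast at h2
      calc dist (f (max (-M) (min x M))) (f (max (-M) (min y M)))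
          ≤ Lf * dist (max (-M) (min x M)) (max (-M) (min y M)) := h1
        _ ≤ Lf * dist x y := mul_le_mul_of_nonneg_left (by linarith) Lf.coe_nonneg
    exact this.continuous
  · intro x hx
    simp only [min_eq_left hx.2, max_eq_right hx.1]

lemma abs_le_of_lip {M : ℝ} (hM : 0 < M) {f : ℝ → ℝ} {Lf : NNReal}
    (hf : LipschitzOnWith Lf f (Icc (-M) M)) {s : ℝ} (hs : s ∈ Icc (-M) M) :
    |f s| ≤ |f 0| + Lf * M := by
  have h0 : (0:ℝ) ∈ Icc (-M) M := by constructor <;> linarith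
  have := hf.dist_le_mul s hs 0 h0
  rw [Real.dist_eq, Real.dist_eq, sub_zero] at this
  have habs : |s| ≤ M := abs_le.mpr ⟨hs.1, hs.2⟩
  have hL : (0:ℝ) ≤ (Lf:ℝ) := Lf.coe_nonneg
  calc |f s| ≤ |f s - f 0| + |f 0| := by
        have := abs_sub_abs_le_abs_sub (f s) (f 0); linarith [abs_abs (f s)]
    _ ≤ |f 0| + Lf * M := by nlinarith

lemma finmeas : IsFiniteMeasure (volume.restrict (Ioo (-1 : ℝ) 1)) :=
  ⟨by rw [Measure.restrict_apply_univ]; exact measure_Ioo_lt_top⟩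

lemma cs_bound (d : ℝ → ℝ) (hd : Measurable d) (B : ℝ) (hb : ∀ z, |d z| ≤ B) :
    (∫ z in Ioo (-1 : ℝ) 1, |d z|) ^ 2 ≤ 2 * ∫ z in Ioo (-1 : ℝ) 1, d z ^ 2 := by
  haveI := finmeas
  have hpq : Real.HolderConjugate 2 2 := ⟨by norm_num, by norm_num, by norm_num⟩
  have hf : MemLp (fun z => |d z|) (ENNReal.ofReal 2) (volume.restrict (Ioo (-1:ℝ) 1)) := by
    refine MemLp.mono_exponent ?_ le_top
    exact memLp_top_of_bound (hd.abs.aestronglyMeasurable) B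
      (Eventually.of_forall fun z => by simpa [abs_abs] using hb z)
  have hg : MemLp (fun _ : ℝ => (1:ℝ)) (ENNReal.ofReal 2) (volume.restrict (Ioo (-1:ℝ) 1)) :=
    memLp_const 1
  have key := integral_mul_le_Lp_mul_Lq_of_nonneg hpq
    (Eventually.of_forall fun z => abs_nonneg (d z))
    (Eventually.of_forall fun _ => zero_le_one) hf hg
  simp only [mul_one, one_rpow] at key
  have h2 : (∫ z in Ioo (-1:ℝ) 1, |d z| ^ (2:ℝ)) = ∫ z in Ioo (-1:ℝ) 1, d z ^ 2 := by
    refine integral_congr_ae (Eventually.of_forall fun z => ?_)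
    show |d z| ^ (2:ℝ) = d z ^ 2
    rw [show |d z| ^ (2:ℝ) = |d z| ^ (2:ℕ) by rw [← Real.rpow_natCast]; norm_num, sq_abs]
  have h3 : (∫ _ in Ioo (-1:ℝ) 1, (1:ℝ)) = 2 := by
    simp [Real.volume_Ioo]
    norm_num
  rw [h2, h3] at key
  have hS0 : 0 ≤ ∫ z in Ioo (-1:ℝ) 1, d z ^ 2 :=
    setIntegral_nonneg measurableSet_Ioo fun z _ => sq_nonneg _
  have hA0 : 0 ≤ ∫ z in Ioo (-1:ℝ) 1, |d z| :=
    setIntegral_nonneg measurableSet_Ioo fun z _ => abs_nonneg _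
  have hsq : ((∫ z in Ioo (-1:ℝ) 1, d z ^ 2) ^ (1/2:ℝ) * (2:ℝ) ^ (1/2:ℝ)) ^ 2
      = (∫ z in Ioo (-1:ℝ) 1, d z ^ 2) * 2 := by
    rw [mul_pow, ← Real.rpow_natCast (_ ^ (1/2:ℝ)) 2, ← Real.rpow_natCast ((2:ℝ) ^ (1/2:ℝ)) 2,
      ← Real.rpow_mul hS0, ← Real.rpow_mul (by norm_num : (0:ℝ) ≤ 2)]
    norm_num
  nlinarith [Real.rpow_nonneg hS0 (1/2:ℝ), Real.rpow_nonneg (by norm_num : (0:ℝ) ≤ 2) (1/2:ℝ), key]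

lemma integrable_bdd_on (u : ℝ → ℝ) (hu : Measurable u) (B : ℝ)
    (hb : ∀ z ∈ Ioo (-1:ℝ) 1, |u z| ≤ B) : IntegrableOn u (Ioo (-1 : ℝ) 1) := by
  haveI := finmeas
  refine Integrable.mono' (integrable_const B) hu.aestronglyMeasurable ?_
  filter_upwards [ae_restrict_mem measurableSet_Ioo] with z hz
  simpa using hb z hz

lemma integrable_mul_chebW (u : ℝ → ℝ) (hu : Measurable u) (B : ℝ)
    (hb : ∀ z, |u z| ≤ B) :
    IntegrableOn (fun z => u z * chebW z) (Ioo (-1 : ℝ) 1) := by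
  refine Integrable.mono' (integrableOn_chebW.const_mul B)
    ((hu.mul measurable_chebW).aestronglyMeasurable) (Eventually.of_forall fun z => ?_)
  rw [Real.norm_eq_abs, abs_mul, abs_of_nonneg (chebW_nonneg z)]
  exact mul_le_mul_of_nonneg_right (hb z) (chebW_nonneg z)

set_option maxHeartbeats 2000000 in
/-- Lipschitz continuity of the peridynamic operator on uniformly bounded
sets: if `k, h` are Lipschitz on `[-M,M]`, then there exists `C > 0`, depending only on
`M`, the Lipschitz constants, the sup-bounds of `k, h` on `[-M,M]` and `δ`, such that for
all measurable `θ₁, θ₂ : [-1,1] → [-M,M]`,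
`‖L(θ₁) − L(θ₂)‖_{L²_w} ≤ C ‖θ₁ − θ₂‖_{L²_w}`. -/
theorem periL_lipschitz (δ : ℝ) (hδ : δ ∈ Ioo (0 : ℝ) 1)
    (M : ℝ) (hM : 0 < M) (k h : ℝ → ℝ) (Lk Lh : NNReal)
    (hk : LipschitzOnWith Lk k (Icc (-M) M)) (hh : LipschitzOnWith Lh h (Icc (-M) M)) :
    ∃ C > (0 : ℝ), ∀ θ₁ θ₂ : ℝ → ℝ, Measurable θ₁ → Measurable θ₂ →
      (∀ z, θ₁ z ∈ Icc (-M) M) → (∀ z, θ₂ z ∈ Icc (-M) M) →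
      L2wNorm (fun z => periL δ k h θ₁ z - periL δ k h θ₂ z)
        ≤ C * L2wNorm (fun z => θ₁ z - θ₂ z) := by
  haveI := finmeas
  obtain ⟨hδ0, hδ1⟩ := hδ
  set Kb := |k 0| + (Lk:ℝ) * M with hKbdef
  set Hb := |h 0| + (Lh:ℝ) * M with hHbdef
  clear_value Kb
  have hKb0 : 0 ≤ Kb := by rw [hKbdef]; positivity
  clear_value Hb
  have hHb0 : 0 ≤ Hb := by rw [hHbdef]; positivity
  set c₁ := (1/δ) * (((Lk:ℝ)/2) * (2*Hb+2) + Kb*(Lh:ℝ)) with hc₁def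
  clear_value c₁
  have hc₁0 : 0 ≤ c₁ := by
    rw [hc₁def]
    have := Lk.coe_nonneg; have := Lh.coe_nonneg
    positivity
  set W := ∫ z in Ioo (-1:ℝ) 1, chebW z with hWdef
  clear_value W
  have hW0 : 0 ≤ W := by
    rw [hWdef]; exact setIntegral_nonneg measurableSet_Ioo fun z _ => chebW_nonneg z
  refine ⟨Real.sqrt (c₁^2 * (8 + 4*W)) + 1, by positivity, ?_⟩
  intro θ₁ θ₂ m₁ m₂ b₁ b₂
  obtain ⟨kc, kc_cont, kc_eq⟩ := exists_cont_ext hM hk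
  obtain ⟨hcf, hc_cont, hc_eq⟩ := exists_cont_ext hM hh
  have mk1 : Measurable fun z => k (θ₁ z) := by
    have : (fun z => k (θ₁ z)) = fun z => kc (θ₁ z) := funext fun z => (kc_eq _ (b₁ z)).symm
    rw [this]; exact kc_cont.measurable.comp m₁
  have mk2 : Measurable fun z => k (θ₂ z) := by
    have : (fun z => k (θ₂ z)) = fun z => kc (θ₂ z) := funext fun z => (kc_eq _ (b₂ z)).symm
    rw [this]; exact kc_cont.measurable.comp m₂
  have mh1 : Measurable fun z => h (θ₁ z) := by
    have : (fun z => h (θ₁ z)) = fun z => hcf (θ₁ z) := funext fun z => (hc_eq _ (b₁ z)).symm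
    rw [this]; exact hc_cont.measurable.comp m₁
  have mh2 : Measurable fun z => h (θ₂ z) := by
    have : (fun z => h (θ₂ z)) = fun z => hcf (θ₂ z) := funext fun z => (hc_eq _ (b₂ z)).symm
    rw [this]; exact hc_cont.measurable.comp m₂
  have hDb : ∀ z, |θ₁ z - θ₂ z| ≤ 2*M := fun z =>
    abs_le.mpr ⟨by linarith [(b₁ z).1, (b₂ z).2], by linarith [(b₁ z).2, (b₂ z).1]⟩
  have hKs : ∀ s ∈ Icc (-M) M, |k s| ≤ Kb := fun s hs => by
    rw [hKbdef]; exact abs_le_of_lip hM hk hs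
  have hHs : ∀ s ∈ Icc (-M) M, |h s| ≤ Hb := fun s hs => by
    rw [hHbdef]; exact abs_le_of_lip hM hh hs
  set S := ∫ z in Ioo (-1:ℝ) 1, (θ₁ z - θ₂ z)^2 * chebW z with hSdef
  clear_value S
  have hS0 : 0 ≤ S := by
    rw [hSdef]
    exact setIntegral_nonneg measurableSet_Ioo fun z _ => mul_nonneg (sq_nonneg _) (chebW_nonneg z)
  have hSint : IntegrableOn (fun z => (θ₁ z - θ₂ z)^2 * chebW z) (Ioo (-1:ℝ) 1) := by
    refine integrable_mul_chebW _ (by fun_prop) ((2*M)^2) (fun z => ?_)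
    rw [abs_of_nonneg (sq_nonneg _), ← sq_abs]
    exact pow_le_pow_left₀ (abs_nonneg _) (hDb z) 2
  have hDint : IntegrableOn (fun z => |θ₁ z - θ₂ z|) (Ioo (-1:ℝ) 1) :=
    integrable_bdd_on _ (by fun_prop) (2*M) (fun z _ => by simpa [abs_abs] using hDb z)
  set I := ∫ z in Ioo (-1:ℝ) 1, |θ₁ z - θ₂ z| with hIdef
  clear_value I
  have hI0 : 0 ≤ I := by
    rw [hIdef]; exact setIntegral_nonneg measurableSet_Ioo fun z _ => abs_nonneg _
  have hI2 : I^2 ≤ 2*S := by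
    have hcs := cs_bound (fun z => θ₁ z - θ₂ z) (m₁.sub m₂) (2*M) hDb
    beta_reduce at hcs
    rw [← hIdef] at hcs
    have hmono : (∫ z in Ioo (-1:ℝ) 1, (θ₁ z - θ₂ z)^2) ≤ S := by
      rw [hSdef]
      refine integral_mono_of_nonneg (Eventually.of_forall fun z => sq_nonneg _) hSint ?_
      filter_upwards [ae_restrict_mem measurableSet_Ioo] with z hz
      have h1 := one_le_chebW hz
      nlinarith [sq_nonneg (θ₁ z - θ₂ z)]
    calc I^2 ≤ 2 * ∫ z in Ioo (-1:ℝ) 1, (θ₁ z - θ₂ z)^2 := hcs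
      _ ≤ 2*S := by linarith
  -- pointwise bound on the operator difference
  have key : ∀ z ∈ Ioo (-1:ℝ) 1, |periL δ k h θ₁ z - periL δ k h θ₂ z|
      ≤ c₁ * (2*|θ₁ z - θ₂ z| + I) := by
    intro z hz
    have hzabs : |z| ≤ 1 := le_of_lt (abs_lt.mpr ⟨hz.1, hz.2⟩)
    set g₁ := fun z' => phiBar δ (z' - z) * ((k (θ₁ z) + k (θ₁ z')) / 2)
        * ((h (θ₁ z') + z') - (h (θ₁ z) + z)) with hg₁def
    set g₂ := fun z' => phiBar δ (z' - z) * ((k (θ₂ z) + k (θ₂ z')) / 2)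
        * ((h (θ₂ z') + z') - (h (θ₂ z) + z)) with hg₂def
    have hbnd : ∀ (θ : ℝ → ℝ), (∀ w, θ w ∈ Icc (-M) M) → ∀ z' ∈ Ioo (-1:ℝ) 1,
        |phiBar δ (z' - z) * ((k (θ z) + k (θ z')) / 2) * ((h (θ z') + z') - (h (θ z) + z))|
          ≤ (1/δ) * Kb * (2*Hb+2) := by
      intro θ hθ z' hz'
      have hz'abs : |z'| ≤ 1 := le_of_lt (abs_lt.mpr ⟨hz'.1, hz'.2⟩)
      rw [abs_mul, abs_mul]
      have h1 : |phiBar δ (z' - z)| ≤ 1/δ := abs_phiBar_le ⟨hδ0, hδ1⟩ _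
      have h2 : |(k (θ z) + k (θ z')) / 2| ≤ Kb := by
        rw [abs_div, abs_two, div_le_iff₀ (by norm_num : (0:ℝ) < 2)]
        have := hKs _ (hθ z); have := hKs _ (hθ z')
        calc |k (θ z) + k (θ z')| ≤ |k (θ z)| + |k (θ z')| := abs_add_le _ _
          _ ≤ Kb * 2 := by linarith
      have h3 : |(h (θ z') + z') - (h (θ z) + z)| ≤ 2*Hb+2 := by
        have := hHs _ (hθ z); have := hHs _ (hθ z')
        calc |(h (θ z') + z') - (h (θ z) + z)| ≤ |h (θ z') + z'| + |h (θ z) + z| :=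
              abs_sub _ _
          _ ≤ (|h (θ z')| + |z'|) + (|h (θ z)| + |z|) := add_le_add (abs_add_le _ _) (abs_add_le _ _)
          _ ≤ 2*Hb+2 := by linarith
      exact mul_le_mul (mul_le_mul h1 h2 (abs_nonneg _) (by positivity)) h3 (abs_nonneg _)
        (by positivity)
    have hmg₁ : Measurable g₁ := by
      rw [hg₁def]
      exact (((measurable_phiBar δ).comp (measurable_id.sub_const z)).mul
        ((measurable_const.add mk1).div_const 2)).mul
        ((mh1.add measurable_id).sub measurable_const)
    have hmg₂ : Measurable g₂ := by
      rw [hg₂def]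
      exact (((measurable_phiBar δ).comp (measurable_id.sub_const z)).mul
        ((measurable_const.add mk2).div_const 2)).mul
        ((mh2.add measurable_id).sub measurable_const)
    have hig₁ : IntegrableOn g₁ (Ioo (-1:ℝ) 1) :=
      integrable_bdd_on _ hmg₁ _ (fun z' hz' => hbnd θ₁ b₁ z' hz')
    have hig₂ : IntegrableOn g₂ (Ioo (-1:ℝ) 1) :=
      integrable_bdd_on _ hmg₂ _ (fun z' hz' => hbnd θ₂ b₂ z' hz')
    have hsub : periL δ k h θ₁ z - periL δ k h θ₂ z
        = ∫ z' in Ioo (-1:ℝ) 1, (g₁ z' - g₂ z') := by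
      unfold periL
      rw [integral_sub hig₁ hig₂]
    have hmaj : Integrable (fun z' => c₁ * (|θ₁ z - θ₂ z| + |θ₁ z' - θ₂ z'|))
        (volume.restrict (Ioo (-1:ℝ) 1)) :=
      (((integrable_const _).add hDint).const_mul c₁)
    have habs : |∫ z' in Ioo (-1:ℝ) 1, (g₁ z' - g₂ z')|
        ≤ ∫ z' in Ioo (-1:ℝ) 1, c₁ * (|θ₁ z - θ₂ z| + |θ₁ z' - θ₂ z'|) := by
      rw [← Real.norm_eq_abs]
      refine norm_integral_le_of_norm_le hmaj ?_
      filter_upwards [ae_restrict_mem measurableSet_Ioo] with z' hz'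
      have hz'abs : |z'| ≤ 1 := le_of_lt (abs_lt.mpr ⟨hz'.1, hz'.2⟩)
      rw [Real.norm_eq_abs, hg₁def, hg₂def]
      have hk1 := hk.dist_le_mul _ (b₁ z) _ (b₂ z)
      have hk2 := hk.dist_le_mul _ (b₁ z') _ (b₂ z')
      have hh1 := hh.dist_le_mul _ (b₁ z) _ (b₂ z)
      have hh2 := hh.dist_le_mul _ (b₁ z') _ (b₂ z')
      rw [Real.dist_eq, Real.dist_eq] at hk1 hk2 hh1 hh2
      have factor : phiBar δ (z' - z) * ((k (θ₁ z) + k (θ₁ z')) / 2)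
            * ((h (θ₁ z') + z') - (h (θ₁ z) + z))
          - phiBar δ (z' - z) * ((k (θ₂ z) + k (θ₂ z')) / 2)
            * ((h (θ₂ z') + z') - (h (θ₂ z) + z))
          = phiBar δ (z' - z) *
            ((((k (θ₁ z) + k (θ₁ z')) - (k (θ₂ z) + k (θ₂ z'))) / 2)
                * ((h (θ₁ z') + z') - (h (θ₁ z) + z))
              + ((k (θ₂ z) + k (θ₂ z')) / 2)
                * ((h (θ₁ z') - h (θ₂ z')) - (h (θ₁ z) - h (θ₂ z)))) := by ring
      rw [factor, abs_mul]
      have hA : |((k (θ₁ z) + k (θ₁ z')) - (k (θ₂ z) + k (θ₂ z'))) / 2|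
          ≤ ((Lk:ℝ)/2) * (|θ₁ z - θ₂ z| + |θ₁ z' - θ₂ z'|) := by
        rw [abs_div, abs_two, div_le_iff₀ (by norm_num : (0:ℝ) < 2)]
        calc |(k (θ₁ z) + k (θ₁ z')) - (k (θ₂ z) + k (θ₂ z'))|
            = |(k (θ₁ z) - k (θ₂ z)) + (k (θ₁ z') - k (θ₂ z'))| := by ring_nf
          _ ≤ |k (θ₁ z) - k (θ₂ z)| + |k (θ₁ z') - k (θ₂ z')| := abs_add_le _ _
          _ ≤ (Lk:ℝ) * |θ₁ z - θ₂ z| + (Lk:ℝ) * |θ₁ z' - θ₂ z'| := add_le_add hk1 hk2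
          _ = ((Lk:ℝ)/2) * (|θ₁ z - θ₂ z| + |θ₁ z' - θ₂ z'|) * 2 := by ring
      have hB1 : |(h (θ₁ z') + z') - (h (θ₁ z) + z)| ≤ 2*Hb+2 := by
        have := hHs _ (b₁ z); have := hHs _ (b₁ z')
        calc |(h (θ₁ z') + z') - (h (θ₁ z) + z)| ≤ |h (θ₁ z') + z'| + |h (θ₁ z) + z| :=
              abs_sub _ _
          _ ≤ (|h (θ₁ z')| + |z'|) + (|h (θ₁ z)| + |z|) := add_le_add (abs_add_le _ _) (abs_add_le _ _)
          _ ≤ 2*Hb+2 := by linarith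
      have hA2 : |(k (θ₂ z) + k (θ₂ z')) / 2| ≤ Kb := by
        rw [abs_div, abs_two, div_le_iff₀ (by norm_num : (0:ℝ) < 2)]
        have := hKs _ (b₂ z); have := hKs _ (b₂ z')
        calc |k (θ₂ z) + k (θ₂ z')| ≤ |k (θ₂ z)| + |k (θ₂ z')| := abs_add_le _ _
          _ ≤ Kb * 2 := by linarith
      have hB2 : |(h (θ₁ z') - h (θ₂ z')) - (h (θ₁ z) - h (θ₂ z))|
          ≤ (Lh:ℝ) * (|θ₁ z - θ₂ z| + |θ₁ z' - θ₂ z'|) := by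
        calc |(h (θ₁ z') - h (θ₂ z')) - (h (θ₁ z) - h (θ₂ z))|
            ≤ |h (θ₁ z') - h (θ₂ z')| + |h (θ₁ z) - h (θ₂ z)| := abs_sub _ _
          _ ≤ (Lh:ℝ) * |θ₁ z' - θ₂ z'| + (Lh:ℝ) * |θ₁ z - θ₂ z| := add_le_add hh2 hh1
          _ = (Lh:ℝ) * (|θ₁ z - θ₂ z| + |θ₁ z' - θ₂ z'|) := by ring
      have hp := abs_phiBar_le (⟨hδ0, hδ1⟩ : δ ∈ Ioo (0:ℝ) 1) (z' - z)
      have hd0 : (0:ℝ) ≤ |θ₁ z - θ₂ z| + |θ₁ z' - θ₂ z'| :=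
        add_nonneg (abs_nonneg _) (abs_nonneg _)
      have hLk0 : (0:ℝ) ≤ (Lk:ℝ) := Lk.coe_nonneg
      have hLh0 : (0:ℝ) ≤ (Lh:ℝ) := Lh.coe_nonneg
      have hinner : |(((k (θ₁ z) + k (θ₁ z')) - (k (θ₂ z) + k (θ₂ z'))) / 2)
              * ((h (θ₁ z') + z') - (h (θ₁ z) + z))
            + ((k (θ₂ z) + k (θ₂ z')) / 2)
              * ((h (θ₁ z') - h (θ₂ z')) - (h (θ₁ z) - h (θ₂ z)))|
          ≤ (((Lk:ℝ)/2) * (|θ₁ z - θ₂ z| + |θ₁ z' - θ₂ z'|)) * (2*Hb+2)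
            + Kb * ((Lh:ℝ) * (|θ₁ z - θ₂ z| + |θ₁ z' - θ₂ z'|)) := by
        calc _ ≤ |(((k (θ₁ z) + k (θ₁ z')) - (k (θ₂ z) + k (θ₂ z'))) / 2)|
                  * |((h (θ₁ z') + z') - (h (θ₁ z) + z))|
                + |((k (θ₂ z) + k (θ₂ z')) / 2)|
                  * |((h (θ₁ z') - h (θ₂ z')) - (h (θ₁ z) - h (θ₂ z)))| :=
              (abs_add_le _ _).trans (by rw [abs_mul, abs_mul])
          _ ≤ _ := add_le_add
              (mul_le_mul hA hB1 (abs_nonneg _) (by positivity))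
              (mul_le_mul hA2 hB2 (abs_nonneg _) hKb0)
      calc |phiBar δ (z' - z)|
            * |(((k (θ₁ z) + k (θ₁ z')) - (k (θ₂ z) + k (θ₂ z'))) / 2)
                * ((h (θ₁ z') + z') - (h (θ₁ z) + z))
              + ((k (θ₂ z) + k (θ₂ z')) / 2)
                * ((h (θ₁ z') - h (θ₂ z')) - (h (θ₁ z) - h (θ₂ z)))|
          ≤ (1/δ) *
            ((((Lk:ℝ)/2) * (|θ₁ z - θ₂ z| + |θ₁ z' - θ₂ z'|)) * (2*Hb+2)
              + Kb * ((Lh:ℝ) * (|θ₁ z - θ₂ z| + |θ₁ z' - θ₂ z'|))) :=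
            mul_le_mul hp hinner (abs_nonneg _) (by positivity)
        _ = c₁ * (|θ₁ z - θ₂ z| + |θ₁ z' - θ₂ z'|) := by rw [hc₁def]; ring
    have hcalc : (∫ z' in Ioo (-1:ℝ) 1, c₁ * (|θ₁ z - θ₂ z| + |θ₁ z' - θ₂ z'|))
        = c₁ * (2*|θ₁ z - θ₂ z| + I) := by
      rw [integral_const_mul]
      congr 1
      rw [integral_add (integrable_const _) hDint, setIntegral_const, ← hIdef,
        Real.volume_real_Ioo]
      norm_num
    rw [hsub]
    calc |∫ z' in Ioo (-1:ℝ) 1, (g₁ z' - g₂ z')|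
        ≤ ∫ z' in Ioo (-1:ℝ) 1, c₁ * (|θ₁ z - θ₂ z| + |θ₁ z' - θ₂ z'|) := habs
      _ = c₁ * (2*|θ₁ z - θ₂ z| + I) := hcalc
  -- integrate the squared pointwise bound
  have hmain : (∫ z in Ioo (-1:ℝ) 1, (periL δ k h θ₁ z - periL δ k h θ₂ z)^2 * chebW z)
      ≤ (c₁^2*(8+4*W)) * S := by
    have step1 : (∫ z in Ioo (-1:ℝ) 1, (periL δ k h θ₁ z - periL δ k h θ₂ z)^2 * chebW z)
        ≤ ∫ z in Ioo (-1:ℝ) 1,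
            (c₁^2*8*((θ₁ z - θ₂ z)^2 * chebW z) + (c₁^2*2*I^2)*chebW z) := by
      refine integral_mono_of_nonneg
        (Eventually.of_forall fun z => mul_nonneg (sq_nonneg _) (chebW_nonneg z))
        ((hSint.const_mul _).add (integrableOn_chebW.const_mul _)) ?_
      filter_upwards [ae_restrict_mem measurableSet_Ioo] with z hz
      have hkey := key z hz
      have hb0 : 0 ≤ c₁ * (2*|θ₁ z - θ₂ z| + I) := by positivity
      have h1 : (periL δ k h θ₁ z - periL δ k h θ₂ z)^2
          ≤ (c₁ * (2*|θ₁ z - θ₂ z| + I))^2 :=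
        sq_le_sq' (by linarith [(abs_le.1 hkey).1]) ((abs_le.1 hkey).2)
      have h2 : (c₁ * (2*|θ₁ z - θ₂ z| + I))^2 ≤ c₁^2*(8*(θ₁ z - θ₂ z)^2 + 2*I^2) := by
        nlinarith [mul_nonneg (sq_nonneg c₁) (sq_nonneg (2*|θ₁ z - θ₂ z| - I)),
          sq_abs (θ₁ z - θ₂ z)]
      have h3 : 0 ≤ chebW z := chebW_nonneg z
      calc (periL δ k h θ₁ z - periL δ k h θ₂ z)^2 * chebW z
          ≤ (c₁^2*(8*(θ₁ z - θ₂ z)^2 + 2*I^2)) * chebW z :=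
            mul_le_mul_of_nonneg_right (h1.trans h2) h3
        _ = c₁^2*8*((θ₁ z - θ₂ z)^2 * chebW z) + (c₁^2*2*I^2)*chebW z := by ring
    have step2 : (∫ z in Ioo (-1:ℝ) 1,
          (c₁^2*8*((θ₁ z - θ₂ z)^2 * chebW z) + (c₁^2*2*I^2)*chebW z))
        = c₁^2*8*S + c₁^2*2*I^2*W := by
      rw [integral_add (hSint.const_mul _) (integrableOn_chebW.const_mul _),
        integral_const_mul, integral_const_mul, ← hSdef, ← hWdef]
    have step3 : c₁^2*8*S + c₁^2*2*I^2*W ≤ (c₁^2*(8+4*W)) * S := by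
      nlinarith [mul_nonneg (mul_nonneg (sq_nonneg c₁) hW0)
        (by linarith : (0:ℝ) ≤ 2*S - I^2)]
    linarith
  -- conclude
  simp only [L2wNorm]
  rw [← hSdef]
  have hnn : 0 ≤ ∫ z in Ioo (-1:ℝ) 1, (periL δ k h θ₁ z - periL δ k h θ₂ z)^2 * chebW z :=
    setIntegral_nonneg measurableSet_Ioo fun z _ => mul_nonneg (sq_nonneg _) (chebW_nonneg z)
  have hfin := Real.rpow_le_rpow hnn hmain (by norm_num : (0:ℝ) ≤ 1/2)
  rw [Real.mul_rpow (by positivity) hS0,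
    show (c₁^2*(8+4*W)) ^ (1/2:ℝ) = Real.sqrt (c₁^2*(8+4*W)) from (Real.sqrt_eq_rpow _).symm]
    at hfin
  have hSr : 0 ≤ S ^ (1/2:ℝ) := Real.rpow_nonneg hS0 _
  calc (∫ z in Ioo (-1:ℝ) 1, (periL δ k h θ₁ z - periL δ k h θ₂ z)^2 * chebW z) ^ (1/2:ℝ)
      ≤ Real.sqrt (c₁^2*(8+4*W)) * S ^ (1/2:ℝ) := hfin
    _ ≤ (Real.sqrt (c₁^2*(8+4*W)) + 1) * S ^ (1/2:ℝ) := by nlinarith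
end
end

section
/- Let M > 0 and assume the fully-discrete scheme admits solutions θ^N_n ∈ S_N, n = 0, …, N_T, whose values lie in [-M, M]. Then there exists a constant C_0 > 0, depending only on θ^0, S, T, M, k, h and δ (in particular independent of N and Δt), such that for every 1 ≤ m ≤ N_T: Σ_{n=1}^{m} ‖θ^N_n − θ^N_{n-1}‖_{L^2_w}^2 + ‖θ^N_m‖_{L^2_w}^2 + Δt Σ_{n=1}^{m} ‖L(θ^N_n)‖_{L^2_w}^2 ≤ C_0 (stability estimate for the fully-discrete scheme). -/
open MeasureTheory Real Set Filter

noncomputable section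

namespace Stab

local notation "I01" => Ioo (-1 : ℝ) 1

/-! ### Basic facts about the weight and Chebyshev polynomials -/

lemma chebW_nonneg (z : ℝ) : 0 ≤ chebW z := by
  unfold chebW; positivity

lemma chebW_measurable : Measurable chebW := by
  unfold chebW
  exact ((continuous_const.sub (continuous_pow 2)).sqrt.measurable).inv

lemma chebT_continuous (k : ℕ) : Continuous (chebT k) := by
  unfold chebT
  exact Real.continuous_cos.comp (continuous_const.mul Real.continuous_arccos)

lemma abs_chebT_le_one (k : ℕ) (z : ℝ) : |chebT k z| ≤ 1 := Real.abs_cos_le_one _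

/-! ### Change of variables -/

lemma cos_image_Ioo : Real.cos '' Ioo 0 π = I01 := by
  ext y
  constructor
  · rintro ⟨θ, hθ, rfl⟩
    constructor
    · have := Real.cos_lt_cos_of_nonneg_of_le_pi (le_of_lt hθ.1) le_rfl hθ.2
      simpa [Real.cos_pi] using this
    · have := Real.cos_lt_cos_of_nonneg_of_le_pi le_rfl hθ.2.le hθ.1
      simpa [Real.cos_zero] using this
  · intro hy
    exact ⟨Real.arccos y, ⟨Real.arccos_pos.2 hy.2, by
        rw [Real.arccos]
        have := Real.neg_pi_div_two_lt_arcsin.2 hy.1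
        linarith⟩,
      Real.cos_arccos hy.1.le hy.2.le⟩

lemma cov_integral (g : ℝ → ℝ) :
    ∫ z in I01, g z = ∫ θ in Ioo 0 π, Real.sin θ * g (Real.cos θ) := by
  rw [← cos_image_Ioo,
    MeasureTheory.integral_image_eq_integral_abs_deriv_smul measurableSet_Ioo
      (fun x _ => (Real.hasDerivAt_cos x).hasDerivWithinAt)
      (Real.injOn_cos.mono Ioo_subset_Icc_self) g]
  refine setIntegral_congr_fun measurableSet_Ioo (fun θ hθ => ?_)
  have : |(-Real.sin θ)| = Real.sin θ := by
    rw [abs_neg, abs_of_nonneg (Real.sin_nonneg_of_nonneg_of_le_pi hθ.1.le hθ.2.le)]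
  simp [this, smul_eq_mul]

lemma cov_integrableOn (g : ℝ → ℝ) :
    IntegrableOn g I01 ↔ IntegrableOn (fun θ => Real.sin θ * g (Real.cos θ)) (Ioo 0 π) := by
  rw [← cos_image_Ioo,
    MeasureTheory.integrableOn_image_iff_integrableOn_abs_deriv_smul measurableSet_Ioo
      (fun x _ => (Real.hasDerivAt_cos x).hasDerivWithinAt)
      (Real.injOn_cos.mono Ioo_subset_Icc_self) g]
  constructor <;> intro hint <;> refine hint.congr_fun (fun θ hθ => ?_) measurableSet_Ioo
  · have : |(-Real.sin θ)| = Real.sin θ := by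
      rw [abs_neg, abs_of_nonneg (Real.sin_nonneg_of_nonneg_of_le_pi hθ.1.le hθ.2.le)]
    simp [this, smul_eq_mul]
  · have : |(-Real.sin θ)| = Real.sin θ := by
      rw [abs_neg, abs_of_nonneg (Real.sin_nonneg_of_nonneg_of_le_pi hθ.1.le hθ.2.le)]
    simp [this, smul_eq_mul]

lemma sin_mul_chebW_cos {θ : ℝ} (hθ : θ ∈ Ioo 0 π) :
    Real.sin θ * chebW (Real.cos θ) = 1 := by
  have hs : 0 < Real.sin θ := Real.sin_pos_of_pos_of_lt_pi hθ.1 hθ.2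
  have h1 : Real.sqrt (1 - Real.cos θ ^ 2) = Real.sin θ := by
    rw [show (1 - Real.cos θ ^ 2) = Real.sin θ ^ 2 by
      have := Real.sin_sq_add_cos_sq θ; linarith]
    exact Real.sqrt_sq hs.le
  rw [chebW, h1, mul_inv_cancel₀ hs.ne']

lemma chebT_cos {θ : ℝ} (hθ : θ ∈ Ioo 0 π) (k : ℕ) :
    chebT k (Real.cos θ) = Real.cos (k * θ) := by
  rw [chebT, Real.arccos_cos hθ.1.le hθ.2.le]

end Stab

namespace Stab

local notation "I01" => Ioo (-1 : ℝ) 1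

lemma integral_cos_int_mul (c : ℤ) :
    ∫ θ in (0:ℝ)..π, Real.cos (c * θ) = if c = 0 then π else 0 := by
  rcases eq_or_ne c 0 with rfl | hc
  · simp
  · rw [if_neg hc]
    have h := intervalIntegral.integral_comp_mul_left (a := (0:ℝ)) (b := π)
      (fun x => Real.cos x) (c := (c:ℝ)) (by exact_mod_cast hc)
    simp only [integral_cos, mul_zero] at h
    rw [h]
    simp [Real.sin_int_mul_pi c]

lemma cos_mul_cos (a b : ℝ) :
    Real.cos a * Real.cos b = (Real.cos (a - b) + Real.cos (a + b)) / 2 := by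
  rw [Real.cos_sub, Real.cos_add]; ring

lemma integral_cos_mul_cos (j k : ℕ) :
    ∫ θ in (0:ℝ)..π, Real.cos (j * θ) * Real.cos (k * θ)
      = if j = k then gammaC j else 0 := by
  have key : ∀ θ : ℝ, Real.cos (j * θ) * Real.cos (k * θ)
      = (Real.cos (((j:ℤ) - (k:ℤ) : ℤ) * θ) + Real.cos (((j:ℤ) + (k:ℤ) : ℤ) * θ)) / 2 := by
    intro θ
    rw [cos_mul_cos]
    push_cast
    ring_nf
  simp only [key]
  rw [intervalIntegral.integral_div]
  rw [intervalIntegral.integral_add]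
  · rw [integral_cos_int_mul, integral_cos_int_mul]
    rcases eq_or_ne j k with rfl | hjk
    · rcases eq_or_ne (j:ℤ) 0 with h0 | h0
      · have : j = 0 := by exact_mod_cast h0
        simp [this, gammaC]
      · have h1 : (j:ℤ) + (j:ℤ) ≠ 0 := by
          intro hh; apply h0; omega
        have : j ≠ 0 := by exact_mod_cast h0
        simp [sub_self, h1, gammaC, this]
    · have h1 : (j:ℤ) - (k:ℤ) ≠ 0 := by
        intro hh; apply hjk; omega
      have hjk' : (j:ℤ) ≠ (k:ℤ) := by exact_mod_cast hjk
      have h3 : (j:ℤ) + (k:ℤ) ≠ 0 := by omega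
      simp [h1, h3, hjk]
  · exact (Real.continuous_cos.comp (continuous_const.mul continuous_id)).intervalIntegrable _ _
  · exact (Real.continuous_cos.comp (continuous_const.mul continuous_id)).intervalIntegrable _ _

/-- Orthogonality of Chebyshev polynomials. -/
lemma innerW_chebT (j k : ℕ) :
    innerW (chebT j) (chebT k) = if j = k then gammaC j else 0 := by
  rw [innerW, cov_integral]
  have heq : ∫ θ in Ioo 0 π, Real.sin θ * (chebT j (Real.cos θ) * chebT k (Real.cos θ)
      * chebW (Real.cos θ))
      = ∫ θ in Ioo 0 π, Real.cos (j * θ) * Real.cos (k * θ) := by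
    refine setIntegral_congr_fun measurableSet_Ioo (fun θ hθ => ?_)
    rw [chebT_cos hθ, chebT_cos hθ]
    have h1 := sin_mul_chebW_cos hθ
    calc Real.sin θ * (Real.cos (j*θ) * Real.cos (k*θ) * chebW (Real.cos θ))
        = (Real.sin θ * chebW (Real.cos θ)) * (Real.cos (j*θ) * Real.cos (k*θ)) := by ring
      _ = Real.cos (j*θ) * Real.cos (k*θ) := by rw [h1, one_mul]
  rw [heq, ← MeasureTheory.integral_Ioc_eq_integral_Ioo,
    ← intervalIntegral.integral_of_le Real.pi_pos.le, integral_cos_mul_cos]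

lemma chebW_integrableOn : IntegrableOn chebW I01 := by
  refine (cov_integrableOn chebW).2 ?_
  have : IntegrableOn (fun _ : ℝ => (1:ℝ)) (Ioo 0 π) := integrableOn_const (ne_of_lt (by
    simp [Real.pi_pos]))
  exact this.congr_fun (fun θ hθ => (sin_mul_chebW_cos hθ).symm) measurableSet_Ioo

lemma chebW_integral : ∫ z in I01, chebW z = π := by
  have h := innerW_chebT 0 0
  rw [innerW] at h
  simp only [chebT, Nat.cast_zero, zero_mul, Real.cos_zero, one_mul] at h
  simpa [gammaC] using h

end Stab

namespace Stab

local notation "I01" => Ioo (-1 : ℝ) 1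

/-- A function bounded on `I01` times the weight is integrable. -/
lemma integrableOn_bdd_mul_chebW {u : ℝ → ℝ} (hu : Measurable u) {C : ℝ}
    (hC : ∀ z ∈ I01, |u z| ≤ C) :
    IntegrableOn (fun z => u z * chebW z) I01 := by
  refine Integrable.mono' (g := fun z => C * chebW z)
    (chebW_integrableOn.const_mul C)
    ((hu.mul chebW_measurable).aestronglyMeasurable) ?_
  filter_upwards [ae_restrict_mem measurableSet_Ioo] with z hz
  rw [Real.norm_eq_abs, abs_mul, abs_of_nonneg (chebW_nonneg z)]
  exact mul_le_mul_of_nonneg_right (hC z hz) (chebW_nonneg z)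

lemma integrableOn_sq_mul_chebW {u : ℝ → ℝ} (hu : Measurable u) {C : ℝ}
    (hC : ∀ z ∈ I01, |u z| ≤ C) :
    IntegrableOn (fun z => u z ^ 2 * chebW z) I01 := by
  refine integrableOn_bdd_mul_chebW (hu.pow_const 2) (C := C ^ 2) (fun z hz => ?_)
  rw [abs_pow]
  exact pow_le_pow_left₀ (abs_nonneg _) (hC z hz) 2

/-- `u·v·w` is integrable when `u²w` is integrable and `|v| ≤ 1`. -/
lemma integrableOn_mul_bdd_mul_chebW {u v : ℝ → ℝ} (hu : Measurable u)
    (hint : IntegrableOn (fun z => u z ^ 2 * chebW z) I01)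
    (hv : Measurable v) (hv1 : ∀ z, |v z| ≤ 1) :
    IntegrableOn (fun z => u z * v z * chebW z) I01 := by
  have hg : IntegrableOn (fun z => u z ^ 2 * chebW z + chebW z) I01 :=
    hint.add chebW_integrableOn
  refine Integrable.mono' hg
    (((hu.mul hv).mul chebW_measurable).aestronglyMeasurable) ?_
  filter_upwards [ae_restrict_mem measurableSet_Ioo] with z _
  rw [Real.norm_eq_abs, abs_mul, abs_of_nonneg (chebW_nonneg z), abs_mul]
  have h1 : |u z| * |v z| ≤ |u z| := by
    have := mul_le_mul_of_nonneg_left (hv1 z) (abs_nonneg (u z))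
    simpa using this
  have h2 : |u z| ≤ u z ^ 2 + 1 := by nlinarith [sq_abs (u z), sq_nonneg (|u z| - 1)]
  calc |u z| * |v z| * chebW z ≤ (u z ^ 2 + 1) * chebW z := by
        refine mul_le_mul_of_nonneg_right (h1.trans h2) (chebW_nonneg z)
    _ = u z ^ 2 * chebW z + chebW z := by ring

lemma chebT_measurable (k : ℕ) : Measurable (chebT k) := (chebT_continuous k).measurable

lemma gammaC_pos (k : ℕ) : 0 < gammaC k := by
  unfold gammaC; split <;> positivity

lemma innerW_chebCoeff (u : ℝ → ℝ) (k : ℕ) :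
    innerW u (chebT k) = chebCoeff u k * gammaC k := by
  rw [chebCoeff, div_mul_cancel₀ _ (gammaC_pos k).ne']

/-- **Bessel's inequality** for the Chebyshev projection. -/
lemma bessel (N : ℕ) {u : ℝ → ℝ} (hu : Measurable u)
    (hint : IntegrableOn (fun z => u z ^ 2 * chebW z) I01) :
    ∫ z in I01, (PN N u z) ^ 2 * chebW z ≤ ∫ z in I01, u z ^ 2 * chebW z := by
  set r := Finset.range (N + 1) with hr
  set c := chebCoeff u with hc
  -- integrability of the pieces
  have hTT : ∀ j k : ℕ, IntegrableOn
      (fun z => (c j * chebT j z) * (c k * chebT k z) * chebW z) I01 := by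
    intro j k
    have h0 : IntegrableOn (fun z => chebT j z * chebT k z * chebW z) I01 :=
      integrableOn_bdd_mul_chebW ((chebT_measurable j).mul (chebT_measurable k))
        (C := 1) (fun z _ => by
          rw [abs_mul]
          exact mul_le_one₀ (abs_chebT_le_one j z) (abs_nonneg _) (abs_chebT_le_one k z))
    exact IntegrableOn.congr_fun (h0.const_mul (c j * c k)) (fun z _ => by ring)
      measurableSet_Ioo
  have hTTval : ∀ j k : ℕ,
      (∫ z in I01, (c j * chebT j z) * (c k * chebT k z) * chebW z)
        = c j * c k * (if j = k then gammaC j else 0) := by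
    intro j k
    rw [← innerW_chebT j k, innerW, ← MeasureTheory.integral_const_mul]
    refine setIntegral_congr_fun measurableSet_Ioo (fun z _ => by ring)
  have huT : ∀ k : ℕ, IntegrableOn (fun z => u z * chebT k z * chebW z) I01 :=
    fun k => integrableOn_mul_bdd_mul_chebW hu hint (chebT_measurable k) (abs_chebT_le_one k)
  -- the projection squared
  have hPsq : ∫ z in I01, (PN N u z) ^ 2 * chebW z
      = ∑ k ∈ r, c k ^ 2 * gammaC k := by
    have hexp : ∀ z : ℝ, (PN N u z) ^ 2 * chebW z
        = ∑ j ∈ r, ∑ k ∈ r, (c j * chebT j z) * (c k * chebT k z) * chebW z := by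
      intro z
      rw [PN, sq, Finset.sum_mul_sum, Finset.sum_mul]
      refine Finset.sum_congr rfl (fun j _ => ?_)
      rw [Finset.sum_mul]
    simp only [hexp]
    rw [MeasureTheory.integral_finset_sum _ (fun j _ => integrable_finset_sum _
      (fun k _ => hTT j k))]
    have : ∀ j ∈ r, (∫ z in I01, ∑ k ∈ r, (c j * chebT j z) * (c k * chebT k z) * chebW z)
        = c j ^ 2 * gammaC j := by
      intro j hj
      rw [MeasureTheory.integral_finset_sum _ (fun k _ => hTT j k)]
      rw [Finset.sum_congr rfl (fun k _ => hTTval j k)]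
      rw [Finset.sum_eq_single_of_mem j hj
        (fun k _ hkj => by simp [(Ne.symm hkj : ¬ j = k)])]
      simp [sq]
    rw [Finset.sum_congr rfl this]
  -- the cross term
  have hcross : ∫ z in I01, u z * PN N u z * chebW z
      = ∑ k ∈ r, c k ^ 2 * gammaC k := by
    have hexp : ∀ z : ℝ, u z * PN N u z * chebW z
        = ∑ k ∈ r, c k * (u z * chebT k z * chebW z) := by
      intro z
      rw [PN, Finset.mul_sum, Finset.sum_mul]
      exact Finset.sum_congr rfl (fun k _ => by ring)
    simp only [hexp]
    rw [MeasureTheory.integral_finset_sum _ (fun k _ => (huT k).const_mul (c k))]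
    refine Finset.sum_congr rfl (fun k _ => ?_)
    rw [MeasureTheory.integral_const_mul, ← innerW, innerW_chebCoeff]
    ring
  -- PN N u is bounded and measurable
  have hPN_meas : Measurable (PN N u) := by
    refine Finset.measurable_sum r (fun k _ => ((chebT_measurable k).const_mul (c k)))
  have hPN_bdd : ∀ z ∈ I01, |PN N u z| ≤ ∑ k ∈ r, |c k| := by
    intro z _
    refine (Finset.abs_sum_le_sum_abs _ _).trans ?_
    refine Finset.sum_le_sum (fun k _ => ?_)
    rw [abs_mul]
    exact (mul_le_of_le_one_right (abs_nonneg _) (abs_chebT_le_one k z))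
  have hPNint : IntegrableOn (fun z => (PN N u z) ^ 2 * chebW z) I01 :=
    integrableOn_sq_mul_chebW hPN_meas hPN_bdd
  have huP : IntegrableOn (fun z => u z * PN N u z * chebW z) I01 := by
    have : (fun z => u z * PN N u z * chebW z)
        = fun z => ∑ k ∈ r, c k * (u z * chebT k z * chebW z) := by
      funext z
      rw [PN, Finset.mul_sum, Finset.sum_mul]
      exact Finset.sum_congr rfl (fun k _ => by ring)
    rw [this]
    exact integrable_finset_sum _ (fun k _ => (huT k).const_mul (c k))
  -- expansion of the nonnegative remainder
  have hnonneg : 0 ≤ ∫ z in I01, (u z - PN N u z) ^ 2 * chebW z := by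
    refine MeasureTheory.setIntegral_nonneg measurableSet_Ioo (fun z _ => ?_)
    exact mul_nonneg (sq_nonneg _) (chebW_nonneg z)
  have hexpand : ∫ z in I01, (u z - PN N u z) ^ 2 * chebW z
      = (∫ z in I01, u z ^ 2 * chebW z) - 2 * (∫ z in I01, u z * PN N u z * chebW z)
        + ∫ z in I01, (PN N u z) ^ 2 * chebW z := by
    have : ∀ z : ℝ, (u z - PN N u z) ^ 2 * chebW z
        = u z ^ 2 * chebW z - 2 * (u z * PN N u z * chebW z) + (PN N u z) ^ 2 * chebW z := by
      intro z; ring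
    simp only [this]
    have hi1 : IntegrableOn
        (fun z => u z ^ 2 * chebW z - 2 * (u z * PN N u z * chebW z)) I01 :=
      hint.sub (huP.const_mul 2)
    rw [MeasureTheory.integral_add hi1 hPNint,
      MeasureTheory.integral_sub hint (huP.const_mul 2), MeasureTheory.integral_const_mul]
  rw [hPsq]
  rw [hPsq, hcross] at hexpand
  linarith [hnonneg, hexpand]

end Stab

namespace Stab

local notation "I01" => Ioo (-1 : ℝ) 1

lemma phiDelta_eq_max {δ : ℝ} (hδ : 0 < δ) (z : ℝ) :
    phiDelta δ z = max ((|z| - 1 + δ) / δ) 0 := by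
  rw [phiDelta]
  rcases le_or_gt (1 - δ) |z| with hle | hlt
  · rw [if_pos hle, max_eq_left (div_nonneg (by linarith) hδ.le)]
  · rw [if_neg (not_le.2 hlt), max_eq_right]
    apply div_nonpos_of_nonpos_of_nonneg <;> linarith

lemma phiDelta_continuous {δ : ℝ} (hδ : 0 < δ) : Continuous (phiDelta δ) := by
  have : phiDelta δ = fun z => max ((|z| - 1 + δ) / δ) 0 := funext (phiDelta_eq_max hδ)
  rw [this]
  exact (((continuous_abs.sub continuous_const).add continuous_const).div_const δ).max
    continuous_const

lemma phiBar_zero_of_small {δ : ℝ} (hδ1 : δ < 1) {z : ℝ} (hz : |z| < 1 - δ) :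
    phiBar δ z = 0 := by
  rw [phiBar, phiDelta, if_neg (not_le.2 hz), zero_div]

lemma phiBar_continuous {δ : ℝ} (hδ : δ ∈ Ioo (0:ℝ) 1) : Continuous (phiBar δ) := by
  rw [continuous_iff_continuousAt]
  intro z₀
  rcases eq_or_ne z₀ 0 with rfl | hz₀
  · have hev : phiBar δ =ᶠ[nhds (0:ℝ)] (fun _ => (0:ℝ)) := by
      have hball : Metric.ball (0:ℝ) (1 - δ) ∈ nhds (0:ℝ) :=
        Metric.ball_mem_nhds _ (by linarith [hδ.2])
      filter_upwards [hball] with z hz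
      rw [Metric.mem_ball, Real.dist_eq, sub_zero] at hz
      exact phiBar_zero_of_small hδ.2 hz
    exact ContinuousAt.congr (continuousAt_const) hev.symm
  · have : ContinuousAt (fun z => phiDelta δ z / |z|) z₀ :=
      ((phiDelta_continuous hδ.1).continuousAt).div (continuous_abs.continuousAt)
        (by simpa using hz₀)
    exact this

lemma abs_phiBar_le {δ : ℝ} (hδ : δ ∈ Ioo (0:ℝ) 1) (z : ℝ) : |phiBar δ z| ≤ 1 / δ := by
  rcases lt_or_ge (|z|) (1 - δ) with hlt | hle
  · rw [phiBar_zero_of_small hδ.2 hlt, abs_zero]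
    exact div_nonneg zero_le_one hδ.1.le
  · have hz : 0 < |z| := by linarith [hδ.2]
    rw [phiBar, phiDelta, if_pos hle, abs_div, abs_div, abs_abs,
      abs_of_nonneg (by linarith [hδ.1] : (0:ℝ) ≤ |z| - 1 + δ), abs_of_pos hδ.1]
    rw [div_div, div_le_div_iff₀ (mul_pos hδ.1 hz) hδ.1]
    nlinarith [hδ.1.le, hδ.2]

/-- Pointwise bound on `periL`. -/
lemma abs_periL_le {δ : ℝ} (hδ : δ ∈ Ioo (0:ℝ) 1) {k h θ : ℝ → ℝ} {M Ck Ch : ℝ}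
    (hθM : ∀ z, θ z ∈ Icc (-M) M)
    (hCk : ∀ x ∈ Icc (-M) M, |k x| ≤ Ck) (hCh : ∀ x ∈ Icc (-M) M, |h x| ≤ Ch)
    {z : ℝ} (hz : z ∈ Icc (-1:ℝ) 1) :
    |periL δ k h θ z| ≤ 2 * ((1/δ) * Ck * (2 * Ch + 2)) := by
  have hCk0 : 0 ≤ Ck := (abs_nonneg _).trans (hCk (θ 0) (hθM 0))
  have hCh0 : 0 ≤ Ch := (abs_nonneg _).trans (hCh (θ 0) (hθM 0))
  have hd : (0:ℝ) ≤ 1/δ := div_nonneg zero_le_one hδ.1.le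
  rw [periL, ← Real.norm_eq_abs]
  have hb : ∀ z' : ℝ, z' ∈ I01 →
      ‖phiBar δ (z' - z) * ((k (θ z) + k (θ z')) / 2) * ((h (θ z') + z') - (h (θ z) + z))‖
        ≤ (1/δ) * Ck * (2 * Ch + 2) := by
    intro z' hz'
    rw [Real.norm_eq_abs, abs_mul, abs_mul]
    have h1 : |phiBar δ (z' - z)| ≤ 1/δ := abs_phiBar_le hδ _
    have h2 : |(k (θ z) + k (θ z')) / 2| ≤ Ck := by
      rw [abs_div, abs_of_pos (by norm_num : (0:ℝ) < 2), div_le_iff₀ (by norm_num : (0:ℝ) < 2)]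
      have e1 : |k (θ z)| ≤ Ck := hCk _ (hθM z)
      have e2 : |k (θ z')| ≤ Ck := hCk _ (hθM z')
      have e3 := abs_add_le (k (θ z)) (k (θ z'))
      linarith
    have h3 : |(h (θ z') + z') - (h (θ z) + z)| ≤ 2 * Ch + 2 := by
      have e1 : |h (θ z')| ≤ Ch := hCh _ (hθM z')
      have e2 : |h (θ z)| ≤ Ch := hCh _ (hθM z)
      have e3 : |z'| ≤ 1 := by rw [abs_le]; exact ⟨hz'.1.le, hz'.2.le⟩
      have e4 : |z| ≤ 1 := by rw [abs_le]; exact ⟨hz.1, hz.2⟩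
      have e5 := abs_sub (h (θ z') + z') (h (θ z) + z)
      have e6 := abs_add_le (h (θ z')) z'
      have e7 := abs_add_le (h (θ z)) z
      linarith
    have m1 : |phiBar δ (z' - z)| * |(k (θ z) + k (θ z')) / 2| ≤ (1/δ) * Ck :=
      mul_le_mul h1 h2 (abs_nonneg _) hd
    exact mul_le_mul m1 h3 (abs_nonneg _) (mul_nonneg hd hCk0)
  have hvol : volume I01 < ⊤ := by
    rw [Real.volume_Ioo]
    exact ENNReal.ofReal_lt_top
  have hkey := MeasureTheory.norm_setIntegral_le_of_norm_le_const hvol hb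
  have hvol2 : (volume I01).toReal = 2 := by
    rw [Real.volume_Ioo, ENNReal.toReal_ofReal (by norm_num : (0:ℝ) ≤ 1 - -1)]
    norm_num
  rw [MeasureTheory.measureReal_def, hvol2] at hkey
  linarith [hkey]

end Stab

namespace Stab

local notation "I01" => Ioo (-1 : ℝ) 1

/-- Continuity of the peridynamic operator for continuous bounded data. -/
lemma periL_continuous {δ : ℝ} (hδ : δ ∈ Ioo (0:ℝ) 1) {k h θ : ℝ → ℝ}
    (hk : Continuous k) (hh : Continuous h) (hθ : Continuous θ) {M Ck Ch : ℝ}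
    (hθM : ∀ z, θ z ∈ Icc (-M) M)
    (hCk : ∀ x ∈ Icc (-M) M, |k x| ≤ Ck) (hCh : ∀ x ∈ Icc (-M) M, |h x| ≤ Ch) :
    Continuous (periL δ k h θ) := by
  have hCk0 : 0 ≤ Ck := (abs_nonneg _).trans (hCk (θ 0) (hθM 0))
  have hCh0 : 0 ≤ Ch := (abs_nonneg _).trans (hCh (θ 0) (hθM 0))
  have hd : (0:ℝ) ≤ 1/δ := div_nonneg zero_le_one hδ.1.le
  rw [continuous_iff_continuousAt]
  intro z₀
  have : ContinuousAt (fun z => ∫ z' in I01,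
      phiBar δ (z' - z) * ((k (θ z) + k (θ z')) / 2)
        * ((h (θ z') + z') - (h (θ z) + z))) z₀ := by
    refine MeasureTheory.continuousAt_of_dominated ?_ ?_ ?_ ?_
      (bound := fun _ => (1/δ) * Ck * (2 * Ch + 2 + |z₀|))
    · filter_upwards with z
      refine Continuous.aestronglyMeasurable ?_
      have c1 : Continuous (fun z' : ℝ => phiBar δ (z' - z)) :=
        (phiBar_continuous hδ).comp (continuous_id.sub continuous_const)
      have c2 : Continuous (fun z' : ℝ => (k (θ z) + k (θ z')) / 2) :=
        ((continuous_const.add ((hk.comp hθ))).div_const 2)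
      have c3 : Continuous (fun z' : ℝ => (h (θ z') + z') - (h (θ z) + z)) :=
        (((hh.comp hθ)).add continuous_id).sub continuous_const
      exact (c1.mul c2).mul c3
    · filter_upwards [Metric.closedBall_mem_nhds z₀ one_pos] with z hzb
      rw [Metric.mem_closedBall, Real.dist_eq] at hzb
      have hzabs : |z| ≤ |z₀| + 1 := by
        have := abs_sub_abs_le_abs_sub z z₀
        linarith
      filter_upwards [MeasureTheory.ae_restrict_mem measurableSet_Ioo] with z' hz'
      rw [Real.norm_eq_abs, abs_mul, abs_mul]
      have h1 : |phiBar δ (z' - z)| ≤ 1/δ := abs_phiBar_le hδ _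
      have h2 : |(k (θ z) + k (θ z')) / 2| ≤ Ck := by
        rw [abs_div, abs_of_pos (by norm_num : (0:ℝ) < 2),
          div_le_iff₀ (by norm_num : (0:ℝ) < 2)]
        have e1 : |k (θ z)| ≤ Ck := hCk _ (hθM z)
        have e2 : |k (θ z')| ≤ Ck := hCk _ (hθM z')
        have e3 := abs_add_le (k (θ z)) (k (θ z'))
        linarith
      have h3 : |(h (θ z') + z') - (h (θ z) + z)| ≤ 2 * Ch + 2 + |z₀| := by
        have e1 : |h (θ z')| ≤ Ch := hCh _ (hθM z')
        have e2 : |h (θ z)| ≤ Ch := hCh _ (hθM z)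
        have e3 : |z'| ≤ 1 := by rw [abs_le]; exact ⟨hz'.1.le, hz'.2.le⟩
        have e5 := abs_sub (h (θ z') + z') (h (θ z) + z)
        have e6 := abs_add_le (h (θ z')) z'
        have e7 := abs_add_le (h (θ z)) z
        linarith
      have m1 : |phiBar δ (z' - z)| * |(k (θ z) + k (θ z')) / 2| ≤ (1/δ) * Ck :=
        mul_le_mul h1 h2 (abs_nonneg _) hd
      exact mul_le_mul m1 h3 (abs_nonneg _) (mul_nonneg hd hCk0)
    · refine MeasureTheory.integrableOn_const (ne_of_lt ?_)
      rw [Real.volume_Ioo]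
      exact ENNReal.ofReal_lt_top
    · filter_upwards with z'
      refine Continuous.continuousAt ?_
      have c1 : Continuous (fun z : ℝ => phiBar δ (z' - z)) :=
        (phiBar_continuous hδ).comp (continuous_const.sub continuous_id)
      have c2 : Continuous (fun z : ℝ => (k (θ z) + k (θ z')) / 2) :=
        (((hk.comp hθ)).add continuous_const).div_const 2
      have c3 : Continuous (fun z : ℝ => (h (θ z') + z') - (h (θ z) + z)) :=
        continuous_const.sub ((hh.comp hθ).add continuous_id)
      exact (c1.mul c2).mul c3
  exact this

lemma PN_measurable (N : ℕ) (u : ℝ → ℝ) : Measurable (PN N u) :=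
  Finset.measurable_sum _ (fun j _ => ((chebT_measurable j).const_mul (chebCoeff u j)))

lemma PN_bdd (N : ℕ) (u : ℝ → ℝ) (z : ℝ) :
    |PN N u z| ≤ ∑ j ∈ Finset.range (N + 1), |chebCoeff u j| := by
  refine (Finset.abs_sum_le_sum_abs _ _).trans ?_
  refine Finset.sum_le_sum (fun j _ => ?_)
  rw [abs_mul]
  exact mul_le_of_le_one_right (abs_nonneg _) (abs_chebT_le_one j z)

lemma PN_sq_integrableOn (N : ℕ) (u : ℝ → ℝ) :
    IntegrableOn (fun z => PN N u z ^ 2 * chebW z) I01 :=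
  integrableOn_sq_mul_chebW (PN_measurable N u) (fun z _ => PN_bdd N u z)

/-- Squared `L²_w` norm as an integral. -/
lemma L2wNorm_sq_eq (u : ℝ → ℝ) :
    L2wNorm u ^ 2 = ∫ z in I01, u z ^ 2 * chebW z := by
  have h0 : 0 ≤ ∫ z in I01, u z ^ 2 * chebW z :=
    MeasureTheory.setIntegral_nonneg measurableSet_Ioo
      (fun z _ => mul_nonneg (sq_nonneg _) (chebW_nonneg z))
  rw [L2wNorm, ← Real.sqrt_eq_rpow, Real.sq_sqrt h0]

/-- Bound for the squared norm of a function bounded on `I01`. -/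
lemma sq_integral_le_of_bdd {u : ℝ → ℝ} {C : ℝ} (hC : ∀ z ∈ I01, |u z| ≤ C) :
    ∫ z in I01, u z ^ 2 * chebW z ≤ C ^ 2 * π := by
  have h1 : ∫ z in I01, u z ^ 2 * chebW z ≤ ∫ z in I01, C ^ 2 * chebW z := by
    refine MeasureTheory.integral_mono_of_nonneg ?_ (chebW_integrableOn.const_mul _) ?_
    · filter_upwards with z
      exact mul_nonneg (sq_nonneg _) (chebW_nonneg z)
    · filter_upwards [MeasureTheory.ae_restrict_mem measurableSet_Ioo] with z hz
      refine mul_le_mul_of_nonneg_right ?_ (chebW_nonneg z)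
      rw [← sq_abs]
      exact pow_le_pow_left₀ (abs_nonneg _) (hC z hz) 2
  rw [MeasureTheory.integral_const_mul, chebW_integral] at h1
  exact h1

/-- `∫ (f+g)² w ≤ 2∫f²w + 2∫g²w`. -/
lemma sq_add_integral_le {f g : ℝ → ℝ}
    (hf : IntegrableOn (fun z => f z ^ 2 * chebW z) I01)
    (hg : IntegrableOn (fun z => g z ^ 2 * chebW z) I01) :
    ∫ z in I01, (f z + g z) ^ 2 * chebW z
      ≤ 2 * (∫ z in I01, f z ^ 2 * chebW z) + 2 * ∫ z in I01, g z ^ 2 * chebW z := by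
  have hG : IntegrableOn
      (fun z => 2 * (f z ^ 2 * chebW z) + 2 * (g z ^ 2 * chebW z)) I01 :=
    (hf.const_mul 2).add (hg.const_mul 2)
  have h1 : ∫ z in I01, (f z + g z) ^ 2 * chebW z
      ≤ ∫ z in I01, (2 * (f z ^ 2 * chebW z) + 2 * (g z ^ 2 * chebW z)) := by
    refine MeasureTheory.integral_mono_of_nonneg ?_ hG ?_
    · filter_upwards with z
      exact mul_nonneg (sq_nonneg _) (chebW_nonneg z)
    · filter_upwards with z
      have hw := chebW_nonneg z
      nlinarith [sq_nonneg (f z - g z), sq_nonneg (f z + g z),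
        mul_nonneg (sq_nonneg (f z - g z)) hw]
  rw [MeasureTheory.integral_add (hf.const_mul 2) (hg.const_mul 2),
    MeasureTheory.integral_const_mul, MeasureTheory.integral_const_mul] at h1
  exact h1

/-- Functions in `S_N` are continuous. -/
lemma SN_continuous {N : ℕ} {u : ℝ → ℝ} (hu : u ∈ SN N) : Continuous u := by
  obtain ⟨c, hc⟩ := hu
  have : u = fun z => ∑ j ∈ Finset.range (N + 1), c j * chebT j z := funext hc
  rw [this]
  exact continuous_finset_sum _ (fun j _ => continuous_const.mul (chebT_continuous j))

end Stab


set_option maxHeartbeats 1000000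

/-- Stability estimate for the fully-discrete scheme: there is a constant
`C₀ > 0`, depending only on `θ⁰, S, T, M, k, h, δ` (in particular independent of `N` and
`Δt`), such that any solution `θ^N_n ∈ S_N` of the fully-discrete scheme taking values in
`[-M,M]` satisfies, for every `1 ≤ m ≤ N_T`,
`∑_{n=1}^{m} ‖θ^N_n − θ^N_{n-1}‖² + ‖θ^N_m‖² + Δt ∑_{n=1}^{m} ‖L(θ^N_n)‖² ≤ C₀`. -/
theorem fully_discrete_stability (δ : ℝ) (hδ : δ ∈ Ioo (0 : ℝ) 1)
    (k h : ℝ → ℝ) (hk : LocallyLipschitz k) (hh : LocallyLipschitz h)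
    (M : ℝ) (hM : 0 < M) (T : ℝ) (hT : 0 < T)
    (S θ0 : ℝ → ℝ) (hS : MemL2w S) (hθ0 : MemL2w θ0) :
    ∃ C₀ > (0 : ℝ), ∀ N NT : ℕ, 0 < NT → ∀ θseq : ℕ → ℝ → ℝ,
      (∀ n ≤ NT, θseq n ∈ SN N) →
      (∀ n ≤ NT, ∀ z, θseq n z ∈ Icc (-M) M) →
      θseq 0 = PN N θ0 →
      (∀ n, 1 ≤ n → n ≤ NT → ∀ z,
        θseq n z = θseq (n - 1) z
          + (T / NT) * (PN N (periL δ k h (θseq n)) z + PN N S z)) →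
      ∀ m, 1 ≤ m → m ≤ NT →
        (∑ n ∈ Finset.Icc 1 m, L2wNorm (fun z => θseq n z - θseq (n - 1) z) ^ 2)
          + L2wNorm (θseq m) ^ 2
          + (T / NT) * ∑ n ∈ Finset.Icc 1 m, L2wNorm (periL δ k h (θseq n)) ^ 2
        ≤ C₀ := by
  have hM0 : (0:ℝ) ∈ Icc (-M) M := ⟨by linarith, hM.le⟩
  obtain ⟨Ck, hCk'⟩ := (isCompact_Icc (a := -M) (b := M)).exists_bound_of_continuousOn
    hk.continuous.continuousOn
  obtain ⟨Ch, hCh'⟩ := (isCompact_Icc (a := -M) (b := M)).exists_bound_of_continuousOn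
    hh.continuous.continuousOn
  have hCk : ∀ x ∈ Icc (-M) M, |k x| ≤ Ck := fun x hx => by
    simpa [Real.norm_eq_abs] using hCk' x hx
  have hCh : ∀ x ∈ Icc (-M) M, |h x| ≤ Ch := fun x hx => by
    simpa [Real.norm_eq_abs] using hCh' x hx
  have hCk0 : 0 ≤ Ck := (abs_nonneg _).trans (hCk 0 hM0)
  have hCh0 : 0 ≤ Ch := (abs_nonneg _).trans (hCh 0 hM0)
  set CS := ∫ z in Ioo (-1:ℝ) 1, S z ^ 2 * chebW z with hCSdef
  have hCS0 : 0 ≤ CS :=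
    MeasureTheory.setIntegral_nonneg measurableSet_Ioo
      (fun z _ => mul_nonneg (sq_nonneg _) (Stab.chebW_nonneg z))
  set CL := 2 * ((1/δ) * Ck * (2*Ch + 2)) with hCLdef
  have hCL0 : 0 ≤ CL := by
    have h1 : 0 ≤ (1/δ) * Ck * (2*Ch+2) :=
      mul_nonneg (mul_nonneg (div_nonneg zero_le_one hδ.1.le) hCk0) (by linarith)
    rw [hCLdef]; linarith
  have hπ : (0:ℝ) < π := Real.pi_pos
  have a1 : 0 ≤ CL^2*π := mul_nonneg (sq_nonneg _) hπ.le
  have a2 : 0 ≤ 2*(CL^2*π) + 2*CS := by linarith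
  refine ⟨T^2*(2*(CL^2*π) + 2*CS) + M^2*π + T*(CL^2*π) + 1, ?_, ?_⟩
  · have a3 : 0 ≤ T^2*(2*(CL^2*π) + 2*CS) := mul_nonneg (sq_nonneg T) a2
    have a4 : 0 ≤ M^2*π := mul_nonneg (sq_nonneg M) hπ.le
    have a5 : 0 ≤ T*(CL^2*π) := mul_nonneg hT.le a1
    linarith
  intro N NT hNT θseq hSN hIcc hinit hstep m hm1 hm2
  set Δt := T / (NT:ℝ) with hΔtdef
  have hNT1 : (1:ℝ) ≤ NT := by exact_mod_cast hNT
  have hΔt0 : 0 < Δt := div_pos hT (by linarith)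
  have hΔtT : Δt ≤ T := by rw [hΔtdef]; exact div_le_self hT.le hNT1
  have hΔtNT : Δt * NT = T := by
    rw [hΔtdef]
    exact div_mul_cancel₀ T (by linarith : (NT:ℝ) ≠ 0)
  have hθabs : ∀ n, n ≤ NT → ∀ z, |θseq n z| ≤ M := fun n hn z =>
    abs_le.2 ⟨(hIcc n hn z).1, (hIcc n hn z).2⟩
  have hLbound : ∀ n, n ≤ NT → ∀ z ∈ Ioo (-1:ℝ) 1, |periL δ k h (θseq n) z| ≤ CL := by
    intro n h2 z hz
    rw [hCLdef]
    exact Stab.abs_periL_le hδ (hIcc n h2) hCk hCh ⟨hz.1.le, hz.2.le⟩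
  have hLmeas : ∀ n, n ≤ NT → Measurable (periL δ k h (θseq n)) := fun n hn =>
    (Stab.periL_continuous hδ hk.continuous hh.continuous
      (Stab.SN_continuous (hSN n hn)) (hIcc n hn) hCk hCh).measurable
  have hLint : ∀ n, n ≤ NT →
      IntegrableOn (fun z => periL δ k h (θseq n) z ^ 2 * chebW z) (Ioo (-1:ℝ) 1) :=
    fun n hn => Stab.integrableOn_sq_mul_chebW (hLmeas n hn) (hLbound n hn)
  have hLsq : ∀ n, n ≤ NT → L2wNorm (periL δ k h (θseq n)) ^ 2 ≤ CL^2*π := by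
    intro n hn
    rw [Stab.L2wNorm_sq_eq]
    exact Stab.sq_integral_le_of_bdd (hLbound n hn)
  have hdiffsq : ∀ n, 1 ≤ n → n ≤ NT →
      L2wNorm (fun z => θseq n z - θseq (n-1) z) ^ 2 ≤ Δt^2 * (2*(CL^2*π) + 2*CS) := by
    intro n h1 h2
    have hfun : (fun z => θseq n z - θseq (n-1) z)
        = fun z => Δt * (PN N (periL δ k h (θseq n)) z + PN N S z) := by
      funext z
      rw [hstep n h1 h2 z, hΔtdef]
      ring
    rw [hfun, Stab.L2wNorm_sq_eq]
    have hscale : ∀ z : ℝ, (Δt * (PN N (periL δ k h (θseq n)) z + PN N S z)) ^ 2 * chebW z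
        = Δt^2 * ((PN N (periL δ k h (θseq n)) z + PN N S z) ^ 2 * chebW z) :=
      fun z => by ring
    simp only [hscale]
    rw [MeasureTheory.integral_const_mul]
    refine mul_le_mul_of_nonneg_left ?_ (sq_nonneg Δt)
    have hadd := Stab.sq_add_integral_le (Stab.PN_sq_integrableOn N (periL δ k h (θseq n)))
      (Stab.PN_sq_integrableOn N S)
    have hb1 := Stab.bessel N (hLmeas n h2) (hLint n h2)
    have hb2 := Stab.bessel N hS.1 hS.2
    have hLsq' := Stab.sq_integral_le_of_bdd (hLbound n h2)
    rw [← hCSdef] at hb2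
    linarith
  have hθm : L2wNorm (θseq m) ^ 2 ≤ M^2*π := by
    rw [Stab.L2wNorm_sq_eq]
    exact Stab.sq_integral_le_of_bdd (fun z _ => hθabs m hm2 z)
  have hmNT : (m:ℝ) ≤ NT := by exact_mod_cast hm2
  have hsum1 : ∑ n ∈ Finset.Icc 1 m, L2wNorm (fun z => θseq n z - θseq (n-1) z) ^ 2
      ≤ (m:ℝ) * (Δt^2 * (2*(CL^2*π) + 2*CS)) := by
    have := Finset.sum_le_card_nsmul (Finset.Icc 1 m)
      (fun n => L2wNorm (fun z => θseq n z - θseq (n-1) z) ^ 2)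
      (Δt^2 * (2*(CL^2*π) + 2*CS))
      (fun n hn => hdiffsq n (Finset.mem_Icc.1 hn).1 ((Finset.mem_Icc.1 hn).2.trans hm2))
    simpa [Nat.card_Icc, nsmul_eq_mul] using this
  have hsum2 : ∑ n ∈ Finset.Icc 1 m, L2wNorm (periL δ k h (θseq n)) ^ 2
      ≤ (m:ℝ) * (CL^2*π) := by
    have := Finset.sum_le_card_nsmul (Finset.Icc 1 m)
      (fun n => L2wNorm (periL δ k h (θseq n)) ^ 2) (CL^2*π)
      (fun n hn => hLsq n ((Finset.mem_Icc.1 hn).2.trans hm2))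
    simpa [Nat.card_Icc, nsmul_eq_mul] using this
  have htail1 : (m:ℝ) * (Δt^2 * (2*(CL^2*π) + 2*CS)) ≤ T^2*(2*(CL^2*π) + 2*CS) := by
    have hmd : (m:ℝ) * Δt ≤ T := by nlinarith
    have hmd2 : (m:ℝ) * Δt^2 ≤ T^2 := by nlinarith
    nlinarith
  have htail2 : Δt * ∑ n ∈ Finset.Icc 1 m, L2wNorm (periL δ k h (θseq n)) ^ 2
      ≤ T*(CL^2*π) := by
    have e1 : Δt * ∑ n ∈ Finset.Icc 1 m, L2wNorm (periL δ k h (θseq n)) ^ 2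
        ≤ Δt * ((m:ℝ) * (CL^2*π)) := mul_le_mul_of_nonneg_left hsum2 hΔt0.le
    have hmd : Δt * (m:ℝ) ≤ T := by nlinarith
    nlinarith
  linarith
end
end
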